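/- Kernel/quadratic-form equivalence for the right half-plane, order 0 < ν ≤ 1 (Lemma 14 of the paper, with the half-plane region certified by its proof): Let 0 < ν ≤ 1 and s = sin(πν/2) > 0. Let f, g ∈ ℂⁿ and set ζ = (f, g) ∈ ℂ^{2n}. Then the following are equivalent. (i) Either g = 0, or there exists θ ∈ ℂ with Re θ ≥ 0 such that f = θg. (ii) For every Hermitian positive definite U ∈ ℂ^{n×n}, the (real) Hermitian-form value ζ*(([[0, 2s],[2s, 0]]) ⊗ U)ζ = 2s·(g*Uf + f*Ug) is ≥ 0. -/

import Mathlib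

open Matrix Complex
open scoped Matrix Kronecker ComplexOrder

/-- The largest singular value (ℓ² operator norm) of a complex matrix. -/
noncomputable def sigmaMax {m n : ℕ} (M : Matrix (Fin m) (Fin n) ℂ) : ℝ :=
  ‖LinearMap.toContinuousLinearMap (Matrix.toEuclideanLin M)‖

/-- A real matrix regarded as a complex matrix. -/
noncomputable def cmap {a b : ℕ} (M : Matrix (Fin a) (Fin b) ℝ) : Matrix (Fin a) (Fin b) ℂ :=
  M.map Complex.ofReal

/-- ρ(θ, M) = [θ,1]* M [θ,1], real-valued for Hermitian M. -/
noncomputable def rho (θ : ℂ) (M : Matrix (Fin 2) (Fin 2) ℂ) : ℝ :=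
  (star ![θ, 1] ⬝ᵥ M *ᵥ ![θ, 1]).re

/-- Δ₀ = [[0, e^{iφ}],[e^{−iφ}, 0]]. -/
noncomputable def Delta0 (φ : ℝ) : Matrix (Fin 2) (Fin 2) ℂ :=
  !![0, Complex.exp ((φ : ℂ) * Complex.I);
     Complex.exp (-(φ : ℂ) * Complex.I), 0]

/-- Σ₀ = [[α, β e^{iφ}],[β e^{−iφ}, γ]]. -/
noncomputable def Sigma0 (φ α β γ : ℝ) : Matrix (Fin 2) (Fin 2) ℂ :=
  !![(α : ℂ), (β : ℂ) * Complex.exp ((φ : ℂ) * Complex.I);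
     (β : ℂ) * Complex.exp (-(φ : ℂ) * Complex.I), (γ : ℂ)]

/-- A 3×3 block matrix. -/
noncomputable def block3 {n m p : ℕ}
    (A11 : Matrix (Fin n) (Fin n) ℂ) (A12 : Matrix (Fin n) (Fin m) ℂ)
    (A13 : Matrix (Fin n) (Fin p) ℂ)
    (A21 : Matrix (Fin m) (Fin n) ℂ) (A22 : Matrix (Fin m) (Fin m) ℂ)
    (A23 : Matrix (Fin m) (Fin p) ℂ)
    (A31 : Matrix (Fin p) (Fin n) ℂ) (A32 : Matrix (Fin p) (Fin m) ℂ)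
    (A33 : Matrix (Fin p) (Fin p) ℂ) :
    Matrix ((Fin n ⊕ Fin m) ⊕ Fin p) ((Fin n ⊕ Fin m) ⊕ Fin p) ℂ :=
  Matrix.fromBlocks (Matrix.fromBlocks A11 A12 A21 A22)
    (Matrix.fromRows A13 A23) (Matrix.fromCols A31 A32) A33

lemma form_expand {n : ℕ} (c : ℂ) (U : Matrix (Fin n) (Fin n) ℂ) (f g : Fin n → ℂ) :
    star (fun q : Fin 2 × Fin n => ![f, g] q.1 q.2) ⬝ᵥ
      ((!![0, c; c, 0]) ⊗ₖ U) *ᵥ (fun q : Fin 2 × Fin n => ![f, g] q.1 q.2)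
    = c * (star f ⬝ᵥ (U *ᵥ g) + star g ⬝ᵥ (U *ᵥ f)) := by
  simp only [dotProduct, mulVec, kroneckerMap_apply, Fintype.sum_prod_type,
    Fin.sum_univ_two, Matrix.cons_val', Matrix.cons_val_zero, Matrix.cons_val_one,
    Matrix.head_cons, Matrix.head_fin_const, Matrix.of_apply, Pi.star_apply,
    Matrix.cons_val_fin_one, Matrix.empty_val']
  simp only [Finset.mul_sum, Finset.sum_mul, zero_mul, mul_zero, Finset.sum_const_zero,
    zero_add, add_zero]
  rw [mul_add, Finset.mul_sum, Finset.mul_sum]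
  congr 1 <;>
  · refine Finset.sum_congr rfl fun j _ => ?_
    rw [Finset.mul_sum]
    exact Finset.sum_congr rfl fun j' _ => by ring

lemma vecMulVec_mulVec' {n : ℕ} (v w x : Fin n → ℂ) :
    vecMulVec v w *ᵥ x = (w ⬝ᵥ x) • v := by
  ext j
  simp only [mulVec, dotProduct, vecMulVec_apply, Pi.smul_apply, smul_eq_mul, Finset.sum_mul]
  exact Finset.sum_congr rfl fun i _ => by ring

lemma herm_term {n : ℕ} {U : Matrix (Fin n) (Fin n) ℂ} (hU : U.IsHermitian) (f g : Fin n → ℂ) :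
    star f ⬝ᵥ (U *ᵥ g) = star (star g ⬝ᵥ (U *ᵥ f)) := by
  rw [star_dotProduct, star_mulVec, ← dotProduct_mulVec, hU.eq]

/-- Kernel/quadratic-form equivalence for the right half-plane, order 0 < ν ≤ 1 (Lemma 14). -/
theorem kernel_quadratic_form_right_half_plane {n : ℕ} (ν s : ℝ)
    (hν : 0 < ν) (hν1 : ν ≤ 1) (hs : s = Real.sin (Real.pi * ν / 2)) (hspos : 0 < s)
    (f g : Fin n → ℂ) (ζ : Fin 2 × Fin n → ℂ)
    (hζ : ζ = fun q => ![f, g] q.1 q.2) :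
    (g = 0 ∨ ∃ θ : ℂ, 0 ≤ θ.re ∧ f = θ • g) ↔
    (∀ U : Matrix (Fin n) (Fin n) ℂ, U.IsHermitian → U.PosDef →
      0 ≤ (star ζ ⬝ᵥ ((!![0, ((2 * s : ℝ) : ℂ); ((2 * s : ℝ) : ℂ), 0]) ⊗ₖ U) *ᵥ ζ).re) := by
  subst hζ
  constructor
  · rintro (rfl | ⟨θ, hθ, rfl⟩) U hUH hUP
    · rw [form_expand]
      simp
    · rw [form_expand]
      have hg0 : 0 ≤ star g ⬝ᵥ U *ᵥ g := hUP.posSemidef.dotProduct_mulVec_nonneg g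
      rw [Complex.le_def] at hg0
      have h1 : star (θ • g) ⬝ᵥ (U *ᵥ g) = (starRingEnd ℂ θ) * (star g ⬝ᵥ U *ᵥ g) := by
        simp [star_smul, smul_dotProduct, smul_eq_mul]
      have h2 : star g ⬝ᵥ (U *ᵥ (θ • g)) = θ * (star g ⬝ᵥ U *ᵥ g) := by
        rw [mulVec_smul, dotProduct_smul, smul_eq_mul]
      rw [h1, h2]
      have h3 : (starRingEnd ℂ) θ * (star g ⬝ᵥ U *ᵥ g) + θ * (star g ⬝ᵥ U *ᵥ g)
          = ((2 * θ.re : ℝ) : ℂ) * (star g ⬝ᵥ U *ᵥ g) := by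
        rw [← add_mul]
        congr 1
        rw [add_comm, Complex.add_conj]
      rw [h3, ← mul_assoc, ← Complex.ofReal_mul, Complex.re_ofReal_mul]
      have := hg0.1
      simp only [Complex.zero_re] at this
      nlinarith [mul_nonneg (mul_nonneg hspos.le hθ) this]
  · intro hQ
    by_contra hC
    push_neg at hC
    obtain ⟨hg, hθall⟩ := hC
    have hGpos : 0 < star g ⬝ᵥ g := dotProduct_star_self_pos_iff.mpr hg
    rw [Complex.lt_def] at hGpos
    set Gr : ℝ := (star g ⬝ᵥ g).re with hGr
    have hGrpos : 0 < Gr := by simpa using hGpos.1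
    have hGC : star g ⬝ᵥ g = (Gr : ℂ) := by
      apply Complex.ext
      · simp [hGr]
      · simp [← hGpos.2]
    have hGrne : (Gr : ℂ) ≠ 0 := by
      exact_mod_cast hGrpos.ne'
    set θ : ℂ := (star g ⬝ᵥ f) / (Gr : ℂ) with hθdef
    have hgf : star g ⬝ᵥ f = θ * (Gr : ℂ) := by
      rw [hθdef, div_mul_cancel₀ _ hGrne]
    set h : Fin n → ℂ := f - θ • g with hhdef
    have hf : f = h + θ • g := by rw [hhdef, sub_add_cancel]
    have horth : star g ⬝ᵥ h = 0 := by
      rw [hhdef, dotProduct_sub, dotProduct_smul, hGC, hgf, smul_eq_mul, sub_self]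
    by_cases hh : h = 0
    · -- f = θ • g with θ.re < 0; use U = 1
      have hfθ : f = θ • g := by rw [hf, hh, zero_add]
      have hθre : θ.re < 0 := lt_of_not_ge fun hle => hθall θ hle hfθ
      have key := hQ 1 isHermitian_one Matrix.PosDef.one
      rw [form_expand, one_mulVec, one_mulVec, hfθ] at key
      have e1 : star (θ • g) ⬝ᵥ g + star g ⬝ᵥ (θ • g)
          = ((2 * θ.re * Gr : ℝ) : ℂ) := by
        simp only [star_smul, smul_dotProduct, dotProduct_smul, smul_eq_mul, hGC]
        rw [← add_mul, add_comm, Complex.star_def, Complex.add_conj]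
        push_cast
        ring
      rw [e1, ← Complex.ofReal_mul] at key
      rw [Complex.ofReal_re] at key
      nlinarith [mul_pos (mul_pos hspos hGrpos) (neg_pos.mpr hθre)]
    · -- h ≠ 0; build a counterexample U
      have hHpos : 0 < star h ⬝ᵥ h := dotProduct_star_self_pos_iff.mpr hh
      rw [Complex.lt_def] at hHpos
      set Hr : ℝ := (star h ⬝ᵥ h).re with hHr
      have hHrpos : 0 < Hr := by simpa using hHpos.1
      have hHC : star h ⬝ᵥ h = (Hr : ℂ) := by
        apply Complex.ext
        · simp [hHr]
        · simp [← hHpos.2]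
      have hhg : star h ⬝ᵥ g = 0 := by
        rw [star_dotProduct, horth, star_zero]
      have hhf : star h ⬝ᵥ f = (Hr : ℂ) := by
        rw [hf, dotProduct_add, dotProduct_smul, hhg, hHC, smul_eq_mul, mul_zero, add_zero]
      set R : ℝ := θ.re * Gr with hRdef
      set b : ℝ := -(R + 1) / Hr with hbdef
      have hbHr : b * Hr = -(R + 1) := by
        rw [hbdef, div_mul_cancel₀ _ hHrpos.ne']
      set ε : ℝ := Gr / (2 * (|R| + 1)) with hεdef
      have hεpos : 0 < ε := by positivity
      set v : Fin n → ℂ := g + (b : ℂ) • h with hvdef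
      set U : Matrix (Fin n) (Fin n) ℂ := vecMulVec v (star v) + (ε : ℂ) • 1 with hUdef
      have hPSD : (vecMulVec v (star v)).PosSemidef := by
        rw [vecMulVec_eq (Fin 1), ← conjTranspose_replicateCol]
        exact posSemidef_self_mul_conjTranspose _
      have hPD2 : ((ε : ℂ) • (1 : Matrix (Fin n) (Fin n) ℂ)).PosDef := by
        rw [smul_one_eq_diagonal]
        exact .diagonal fun i => Complex.zero_lt_real.mpr hεpos
      have hUPD : U.PosDef := Matrix.PosDef.posSemidef_add hPSD hPD2
      have key := hQ U hUPD.isHermitian hUPD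
      rw [form_expand] at key
      -- compute the two terms
      have hgv : star g ⬝ᵥ v = (Gr : ℂ) := by
        rw [hvdef, dotProduct_add, dotProduct_smul, horth, hGC, smul_eq_mul, mul_zero, add_zero]
      have hvf : star v ⬝ᵥ f = θ * (Gr : ℂ) + (b : ℂ) * (Hr : ℂ) := by
        rw [hvdef, star_add, add_dotProduct, star_smul, smul_dotProduct, hgf, hhf]
        simp [smul_eq_mul, Complex.conj_ofReal]
      have hUf : U *ᵥ f = (star v ⬝ᵥ f) • v + (ε : ℂ) • f := by
        rw [hUdef, add_mulVec, vecMulVec_mulVec', smul_mulVec, one_mulVec]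
      have hterm : star g ⬝ᵥ (U *ᵥ f)
          = ((θ * (Gr : ℂ) + (b : ℂ) * (Hr : ℂ)) * (Gr : ℂ)) + (ε : ℂ) * (θ * (Gr : ℂ)) := by
        rw [hUf, dotProduct_add, dotProduct_smul, dotProduct_smul, hgv, hvf, hgf]
        simp only [smul_eq_mul]
      have hre : (star g ⬝ᵥ (U *ᵥ f)).re = (R + b * Hr) * Gr + ε * R := by
        rw [hterm]
        simp only [Complex.add_re, Complex.mul_re, Complex.ofReal_re, Complex.ofReal_im,
          Complex.add_im, Complex.mul_im, Complex.ofReal_mul]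
        push_cast
        ring_nf
        rw [hRdef]; ring
      have hsum : star f ⬝ᵥ (U *ᵥ g) + star g ⬝ᵥ (U *ᵥ f)
          = ((2 * (star g ⬝ᵥ (U *ᵥ f)).re : ℝ) : ℂ) := by
        rw [herm_term hUPD.isHermitian, add_comm, Complex.star_def, Complex.add_conj]
      rw [hsum, ← Complex.ofReal_mul, Complex.ofReal_re] at key
      rw [hre, hbHr] at key
      -- key : 0 ≤ 2*s * (2 * ((R + -(R+1))*Gr + ε*R))
      have hεR : ε * R < Gr / 2 := by
        have h1 : ε * R ≤ ε * |R| := by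
          have := le_abs_self R
          nlinarith
        have h2 : ε * |R| < Gr / 2 := by
          rw [hεdef]
          rw [div_mul_eq_mul_div, div_lt_div_iff₀ (by positivity) (by norm_num)]
          nlinarith [abs_nonneg R]
        linarith
      nlinarith
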